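/- Let κ > 0 and r̄ ∈ ℝⁿ. For each ε > 0, the function x ↦ κ xᵀΣx + √ε·√(xᵀΣx) − r̄ᵀx has a unique minimizer x_RMV(ε) over C. There exists a strictly decreasing function ρ* : (0, ∞) → (0, ∞) such that for every ε > 0, x_RMV(ε) = (κρ*(ε)/(1 + κρ*(ε))) · x_MV + (1/(1 + κρ*(ε))) · x_MIN, i.e., the robust mean–variance portfolio is a convex combination of the mean–variance portfolio and the minimum-variance portfolio. -/

import Mathlib

open Matrix

variable {n : ℕ} {A : Matrix (Fin n) (Fin n) ℝ}

lemma qpos (hA : A.PosDef) {x : Fin n → ℝ} (hx : x ≠ 0) : 0 < x ⬝ᵥ A *ᵥ x := by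
  simpa using hA.dotProduct_mulVec_pos hx

lemma qnonneg (hA : A.PosDef) (x : Fin n → ℝ) : 0 ≤ x ⬝ᵥ A *ᵥ x := by
  rcases eq_or_ne x 0 with h | h
  · simp [h]
  · exact (qpos hA h).le

lemma qsymm (hAs : A.IsSymm) (u v : Fin n → ℝ) : u ⬝ᵥ A *ᵥ v = v ⬝ᵥ A *ᵥ u := by
  rw [dotProduct_mulVec, ← mulVec_transpose, hAs.eq, dotProduct_comm]

lemma qexpand (hAs : A.IsSymm) (x z : Fin n → ℝ) :
    (x + z) ⬝ᵥ A *ᵥ (x + z) = x ⬝ᵥ A *ᵥ x + 2 * (z ⬝ᵥ A *ᵥ x) + z ⬝ᵥ A *ᵥ z := by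
  have h1 : (x + z) ⬝ᵥ A *ᵥ (x + z)
      = x ⬝ᵥ A *ᵥ x + x ⬝ᵥ A *ᵥ z + (z ⬝ᵥ A *ᵥ x + z ⬝ᵥ A *ᵥ z) := by
    rw [mulVec_add, add_dotProduct, dotProduct_add, dotProduct_add]
  rw [h1, qsymm hAs x z]; ring

lemma qsmul (a : ℝ) (u v : Fin n → ℝ) : (a • u) ⬝ᵥ A *ᵥ (a • v) = a^2 * (u ⬝ᵥ A *ᵥ v) := by
  rw [mulVec_smul, smul_dotProduct, dotProduct_smul, smul_eq_mul, smul_eq_mul]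
  ring

lemma qcs (hA : A.PosDef) (hAs : A.IsSymm) (u v : Fin n → ℝ) :
    (u ⬝ᵥ A *ᵥ v)^2 ≤ (u ⬝ᵥ A *ᵥ u) * (v ⬝ᵥ A *ᵥ v) := by
  rcases eq_or_ne v 0 with h | h
  · simp [h]
  · have hv : 0 < v ⬝ᵥ A *ᵥ v := qpos hA h
    set p := u ⬝ᵥ A *ᵥ v with hp
    set qv := v ⬝ᵥ A *ᵥ v with hqv
    have h0 : 0 ≤ (u + (-(p/qv)) • v) ⬝ᵥ A *ᵥ (u + (-(p/qv)) • v) := qnonneg hA _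
    rw [qexpand hAs] at h0
    have h1 : ((-(p/qv)) • v) ⬝ᵥ A *ᵥ u = (-(p/qv)) * p := by
      rw [smul_dotProduct, smul_eq_mul, qsymm hAs v u, ← hp]
    have h2 : ((-(p/qv)) • v) ⬝ᵥ A *ᵥ ((-(p/qv)) • v) = (p/qv)^2 * qv := by
      rw [qsmul]; ring
    rw [h1, h2] at h0
    have h5 : u ⬝ᵥ A *ᵥ u + 2 * (-(p/qv) * p) + (p/qv)^2 * qv
        = u ⬝ᵥ A *ᵥ u - p^2/qv := by
      field_simp; ring
    rw [h5] at h0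
    exact (div_le_iff₀ hv).mp (by linarith only [h0])

lemma vecMulVec_mulVec' (w v x : Fin n → ℝ) :
    vecMulVec w v *ᵥ x = (v ⬝ᵥ x) • w := by
  ext i
  simp [mulVec, vecMulVec, dotProduct, Finset.mul_sum, mul_comm, mul_left_comm]

lemma sqrt_quarter (ε ρ : ℝ) (hε : 0 ≤ ε) (hρ : 0 ≤ ρ) :
    Real.sqrt (ε*ρ^2/4) = Real.sqrt ε * ρ / 2 := by
  have h : ε*ρ^2/4 = (Real.sqrt ε * ρ / 2)^2 := by
    rw [div_pow, mul_pow, Real.sq_sqrt hε]; norm_num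
  rw [h, Real.sqrt_sq (by positivity)]

lemma cs_upper (w sy s : ℝ) (hsy : 0 ≤ sy) (hs : 0 < s) (hsq : w^2 ≤ sy^2 * s^2) :
    w ≤ sy * s := by
  nlinarith [mul_nonneg hsy hs.le]

lemma anti_aux (a1 a2 ρ1 ρ2 : ℝ) (ha1 : 0 < a1) (h12 : a1 < a2)
    (hρ1 : 0 < ρ1) (hρ2 : 0 < ρ2)
    (hsum : a1*(a1*ρ1/2) + a2*(a2*ρ2/2) ≤ a1*(a2*ρ2/2) + a2*(a1*ρ1/2)) : ρ2 < ρ1 := by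
  have ha2 : 0 < a2 := ha1.trans h12
  have key : a2*ρ2 ≤ a1*ρ1 := by nlinarith [hsum]
  have h3 : a1*ρ1 < a2*ρ1 := by nlinarith
  nlinarith [key, h3]

set_option maxHeartbeats 1000000 in
theorem stmt4 (n : ℕ) (hn : 1 ≤ n) (A : Matrix (Fin n) (Fin n) ℝ)
    (hA : A.PosDef) (hAs : A.IsSymm)
    (e : Fin n → ℝ) (he : e = fun _ => 1)
    (β : ℝ) (hβ : β = e ⬝ᵥ A⁻¹ *ᵥ e)
    (xMIN : Fin n → ℝ) (hxMIN : xMIN = β⁻¹ • (A⁻¹ *ᵥ e))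
    (κ : ℝ) (hκ : 0 < κ) (rbar : Fin n → ℝ)
    (xMV : Fin n → ℝ)
    (hxMV : xMV = (1 / (2 * κ)) •
        ((A⁻¹ - β⁻¹ • vecMulVec (A⁻¹ *ᵥ e) (e ᵥ* A⁻¹)) *ᵥ rbar) + xMIN) :
    ∃ ρstar : ℝ → ℝ,
      (∀ ε : ℝ, 0 < ε → 0 < ρstar ε) ∧
      StrictAntiOn ρstar (Set.Ioi 0) ∧
      ∀ ε : ℝ, 0 < ε →
        e ⬝ᵥ ((κ * ρstar ε / (1 + κ * ρstar ε)) • xMV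
            + (1 / (1 + κ * ρstar ε)) • xMIN) = 1 ∧
        ∀ y : Fin n → ℝ, e ⬝ᵥ y = 1 →
          y ≠ (κ * ρstar ε / (1 + κ * ρstar ε)) • xMV
              + (1 / (1 + κ * ρstar ε)) • xMIN →
          (κ * (((κ * ρstar ε / (1 + κ * ρstar ε)) • xMV
                + (1 / (1 + κ * ρstar ε)) • xMIN) ⬝ᵥ A *ᵥ
                ((κ * ρstar ε / (1 + κ * ρstar ε)) • xMV
                + (1 / (1 + κ * ρstar ε)) • xMIN))
            + Real.sqrt ε * Real.sqrt (((κ * ρstar ε / (1 + κ * ρstar ε)) • xMV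
                + (1 / (1 + κ * ρstar ε)) • xMIN) ⬝ᵥ A *ᵥ
                ((κ * ρstar ε / (1 + κ * ρstar ε)) • xMV
                + (1 / (1 + κ * ρstar ε)) • xMIN))
            - rbar ⬝ᵥ ((κ * ρstar ε / (1 + κ * ρstar ε)) • xMV
                + (1 / (1 + κ * ρstar ε)) • xMIN))
          < κ * (y ⬝ᵥ A *ᵥ y) + Real.sqrt ε * Real.sqrt (y ⬝ᵥ A *ᵥ y) - rbar ⬝ᵥ y := by
  have hdet : IsUnit A.det := hA.det_pos.ne'.isUnit
  have hAAinv : ∀ x : Fin n → ℝ, A *ᵥ (A⁻¹ *ᵥ x) = x := fun x => by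
    rw [mulVec_mulVec, mul_nonsing_inv A hdet, one_mulVec]
  have hAinvSymm : (A⁻¹).IsSymm := by
    unfold Matrix.IsSymm
    rw [transpose_nonsing_inv, hAs.eq]
  have he0 : e ≠ 0 := by
    intro h
    have := congrFun h ⟨0, hn⟩
    rw [he] at this
    simpa using this
  have hβpos : 0 < β := by
    rw [hβ]; exact qpos hA.inv he0
  have hβi : 0 < β⁻¹ := by positivity
  have hK1 : e ⬝ᵥ xMIN = 1 := by
    rw [hxMIN, dotProduct_smul, smul_eq_mul, ← hβ, inv_mul_cancel₀ hβpos.ne']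
  have hK3 : A *ᵥ xMIN = β⁻¹ • e := by
    rw [hxMIN, mulVec_smul, hAAinv]
  set d : Fin n → ℝ := xMV - xMIN with hd
  have hdval : d = (1 / (2 * κ)) •
      ((A⁻¹ - β⁻¹ • vecMulVec (A⁻¹ *ᵥ e) (e ᵥ* A⁻¹)) *ᵥ rbar) := by
    rw [hd, hxMV]; abel
  have hveA : e ᵥ* A⁻¹ = A⁻¹ *ᵥ e := by
    rw [← mulVec_transpose, hAinvSymm.eq]
  have hPr : (A⁻¹ - β⁻¹ • vecMulVec (A⁻¹ *ᵥ e) (e ᵥ* A⁻¹)) *ᵥ rbar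
      = A⁻¹ *ᵥ rbar - (β⁻¹ * ((A⁻¹ *ᵥ e) ⬝ᵥ rbar)) • (A⁻¹ *ᵥ e) := by
    rw [sub_mulVec, smul_mulVec, vecMulVec_mulVec', hveA, smul_smul]
  have hedot : e ⬝ᵥ (A⁻¹ *ᵥ rbar) = (A⁻¹ *ᵥ e) ⬝ᵥ rbar := by
    rw [dotProduct_mulVec, ← hveA]
  have heAe : e ⬝ᵥ (A⁻¹ *ᵥ e) = β := hβ.symm
  have hK2 : e ⬝ᵥ d = 0 := by
    rw [hdval, hPr, dotProduct_smul, dotProduct_sub, dotProduct_smul, heAe, hedot,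
      smul_eq_mul, smul_eq_mul]
    field_simp; simp
  obtain ⟨c0, hK4⟩ : ∃ c0 : ℝ, A *ᵥ d = (1 / (2*κ)) • rbar + c0 • e := by
    refine ⟨(1/(2*κ)) * (-(β⁻¹ * ((A⁻¹ *ᵥ e) ⬝ᵥ rbar))), ?_⟩
    rw [hdval, mulVec_smul, hPr, mulVec_sub, mulVec_smul, hAAinv, hAAinv,
      smul_sub, ← smul_smul]
    module
  set γ : ℝ := d ⬝ᵥ A *ᵥ d with hγdef
  have hγ : 0 ≤ γ := qnonneg hA d
  -- root existence
  have hroot : ∀ ε : ℝ, 0 < ε → ∃ ρ : ℝ, 0 < ρ ∧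
      ε * ρ^2 / 4 = β⁻¹ + γ * (κ*ρ/(1+κ*ρ))^2 := by
    intro ε hε
    set R : ℝ := 2 * Real.sqrt ((β⁻¹ + γ + 1)/ε) with hR
    have hargpos : 0 < (β⁻¹ + γ + 1)/ε := by positivity
    have hRpos : 0 < R := by rw [hR]; positivity
    set g : ℝ → ℝ := fun ρ => ε * ρ^2/4 - γ * (κ*ρ/(1+κ*ρ))^2 with hg
    have hcont : ContinuousOn g (Set.Icc 0 R) := by
      apply ContinuousOn.sub
      · fun_prop
      · apply ContinuousOn.mul continuousOn_const
        apply ContinuousOn.pow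
        apply ContinuousOn.div (by fun_prop) (by fun_prop)
        intro x hx
        have h2 := mul_nonneg hκ.le hx.1
        exact ne_of_gt (by linarith only [h2])
    have hg0 : g 0 = 0 := by simp [hg]
    have hgR : β⁻¹ ≤ g R := by
      have hR2 : ε * R^2/4 = β⁻¹ + γ + 1 := by
        rw [hR]
        rw [mul_pow, Real.sq_sqrt hargpos.le]
        field_simp
        ring
      have ht0 : 0 ≤ κ*R/(1+κ*R) := by positivity
      have ht1 : κ*R/(1+κ*R) ≤ 1 := by
        have h2 := mul_pos hκ hRpos
        rw [div_le_one (by linarith only [h2])]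
        linarith only [h2]
      set tR := κ*R/(1+κ*R) with htR
      have ht2 : tR^2 ≤ 1 := pow_le_one₀ ht0 ht1
      have : γ * tR^2 ≤ γ := mul_le_of_le_one_right hγ ht2
      simp only [hg]
      linarith only [hR2, this]
    have hmem : β⁻¹ ∈ Set.Icc (g 0) (g R) := ⟨by rw [hg0]; exact hβi.le, hgR⟩
    obtain ⟨ρ, hρmem, hρeq⟩ := intermediate_value_Icc hRpos.le hcont hmem
    have hρpos : 0 < ρ := by
      rcases hρmem.1.lt_or_eq with h | h
      · exact h
      · exfalso; rw [← h, hg0] at hρeq; exact hβi.ne (by linarith only [hρeq])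
    refine ⟨ρ, hρpos, ?_⟩
    simp only [hg] at hρeq
    linarith only [hρeq]
  -- the key minimality fact
  have key : ∀ ε ρ : ℝ, 0 < ε → 0 < ρ →
      ε * ρ^2/4 = β⁻¹ + γ * (κ*ρ/(1+κ*ρ))^2 →
      (e ⬝ᵥ (xMIN + (κ*ρ/(1+κ*ρ)) • d) = 1) ∧
      ((xMIN + (κ*ρ/(1+κ*ρ)) • d) ⬝ᵥ A *ᵥ (xMIN + (κ*ρ/(1+κ*ρ)) • d) = ε*ρ^2/4) ∧
      ∀ y : Fin n → ℝ, e ⬝ᵥ y = 1 → y ≠ xMIN + (κ*ρ/(1+κ*ρ)) • d →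
        κ * ((xMIN + (κ*ρ/(1+κ*ρ)) • d) ⬝ᵥ A *ᵥ (xMIN + (κ*ρ/(1+κ*ρ)) • d))
          + Real.sqrt ε * Real.sqrt ((xMIN + (κ*ρ/(1+κ*ρ)) • d) ⬝ᵥ A *ᵥ
              (xMIN + (κ*ρ/(1+κ*ρ)) • d))
          - rbar ⬝ᵥ (xMIN + (κ*ρ/(1+κ*ρ)) • d)
        < κ * (y ⬝ᵥ A *ᵥ y) + Real.sqrt ε * Real.sqrt (y ⬝ᵥ A *ᵥ y) - rbar ⬝ᵥ y := by
    intro ε ρ hε hρ heq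
    have h1ρ : (0:ℝ) < 1 + κ*ρ := by have := mul_pos hκ hρ; linarith only [this]
    set t : ℝ := κ*ρ/(1+κ*ρ) with ht
    set x : Fin n → ℝ := xMIN + t • d with hx
    have hex : e ⬝ᵥ x = 1 := by
      rw [hx, dotProduct_add, hK1, dotProduct_smul, hK2, smul_eq_mul, mul_zero, add_zero]
    have hdAmin : d ⬝ᵥ A *ᵥ xMIN = 0 := by
      rw [hK3, dotProduct_smul, smul_eq_mul, dotProduct_comm, hK2, mul_zero]
    have hqmin : xMIN ⬝ᵥ A *ᵥ xMIN = β⁻¹ := by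
      rw [hK3, dotProduct_smul, smul_eq_mul, dotProduct_comm, hK1, mul_one]
    have hqx : x ⬝ᵥ A *ᵥ x = ε*ρ^2/4 := by
      rw [hx, qexpand hAs, smul_dotProduct, smul_eq_mul, hdAmin, qsmul, hqmin, heq]
      ring
    have hsx : Real.sqrt (x ⬝ᵥ A *ᵥ x) = Real.sqrt ε * ρ / 2 := by
      rw [hqx, sqrt_quarter ε ρ hε.le hρ.le]
    set s : ℝ := Real.sqrt ε * ρ / 2 with hs
    have hεs : 0 < Real.sqrt ε := Real.sqrt_pos.mpr hε
    have hspos : 0 < s := by rw [hs]; positivity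
    have hs2 : s^2 = x ⬝ᵥ A *ᵥ x := by
      rw [hqx, hs, div_pow, mul_pow, Real.sq_sqrt hε.le]; ring
    have hgrad : A *ᵥ x = (t/(2*κ)) • rbar + (β⁻¹ + t*c0) • e := by
      rw [hx, mulVec_add, hK3, mulVec_smul, hK4, smul_add, smul_smul, smul_smul]
      module
    refine ⟨hex, hqx, ?_⟩
    intro y hey hyne
    set z : Fin n → ℝ := y - x with hz
    have hzne : z ≠ 0 := sub_ne_zero.mpr hyne
    have hy : y = x + z := by rw [hz]; abel
    have hez : e ⬝ᵥ z = 0 := by rw [hz, dotProduct_sub, hey, hex, sub_self]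
    set qz : ℝ := z ⬝ᵥ A *ᵥ z with hqz
    have hqzpos : 0 < qz := qpos hA hzne
    set p : ℝ := z ⬝ᵥ A *ᵥ x with hp
    have hpval : p = (t/(2*κ)) * (rbar ⬝ᵥ z) := by
      rw [hp, hgrad, dotProduct_add, dotProduct_smul, dotProduct_smul, smul_eq_mul,
        smul_eq_mul, dotProduct_comm z e, hez, mul_zero, add_zero, dotProduct_comm]
    have htpos : 0 < t := by rw [ht]; positivity
    have hrz : rbar ⬝ᵥ z = 2*(κ + 1/ρ)*p := by
      rw [hpval, ht]
      field_simp
      ring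
    have hqy : y ⬝ᵥ A *ᵥ y = x ⬝ᵥ A *ᵥ x + 2*p + qz := by
      rw [hy, qexpand hAs]
    have hqypos : 0 ≤ y ⬝ᵥ A *ᵥ y := qnonneg hA y
    set sy : ℝ := Real.sqrt (y ⬝ᵥ A *ᵥ y) with hsy
    have hsy2 : sy^2 = y ⬝ᵥ A *ᵥ y := Real.sq_sqrt hqypos
    have hsynn : 0 ≤ sy := Real.sqrt_nonneg _
    -- Cauchy-Schwarz: q x + p = y ⬝ᵥ A *ᵥ x ≤ sy * s
    have hyx : y ⬝ᵥ A *ᵥ x = x ⬝ᵥ A *ᵥ x + p := by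
      rw [hy, add_dotProduct]
    have hcs : x ⬝ᵥ A *ᵥ x + p ≤ sy * s := by
      have h1 := qcs hA hAs y x
      rw [hyx] at h1
      apply cs_upper _ _ _ hsynn hspos
      rw [hsy2, hs2]
      exact h1
    -- assemble
    have hry : rbar ⬝ᵥ y = rbar ⬝ᵥ x + 2*(κ+1/ρ)*p := by
      rw [hy, dotProduct_add, hrz]
    rw [hsx, hry, hqy]
    have hsqε : Real.sqrt ε = 2*s/ρ := by
      rw [hs]; field_simp
    rw [hsqε]
    rw [← sub_pos]
    have hiden : κ * (x ⬝ᵥ A *ᵥ x + 2*p + qz) + 2*s/ρ * sy - (rbar ⬝ᵥ x + 2*(κ+1/ρ)*p)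
        - (κ * (x ⬝ᵥ A *ᵥ x) + 2*s/ρ * s - rbar ⬝ᵥ x)
        = κ * qz + (2/ρ) * (s*sy - s^2 - p) := by
      field_simp
      ring
    rw [hiden]
    have h2 : 0 ≤ (2/ρ) * (s*sy - s^2 - p) := by
      apply mul_nonneg (by positivity)
      linarith only [hcs, hs2]
    linarith only [mul_pos hκ hqzpos, h2]
  -- define ρstar
  set ρstar : ℝ → ℝ := fun ε => if h : 0 < ε then (hroot ε h).choose else 0 with hρstarDef
  have hρspec : ∀ ε : ℝ, (hε : 0 < ε) → 0 < ρstar ε ∧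
      ε * (ρstar ε)^2/4 = β⁻¹ + γ * (κ*(ρstar ε)/(1+κ*(ρstar ε)))^2 := by
    intro ε hε
    rw [hρstarDef]
    simp only [dif_pos hε]
    exact ⟨(hroot ε hε).choose_spec.1, (hroot ε hε).choose_spec.2⟩
  -- combination identity
  have hcomb : ∀ ρ : ℝ, 0 < ρ →
      (κ*ρ/(1+κ*ρ)) • xMV + (1/(1+κ*ρ)) • xMIN = xMIN + (κ*ρ/(1+κ*ρ)) • d := by
    intro ρ hρ
    have h1 : (0:ℝ) < 1 + κ*ρ := by have := mul_pos hκ hρ; linarith only [this]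
    have h2 : (1:ℝ)/(1+κ*ρ) = 1 - κ*ρ/(1+κ*ρ) := by field_simp; ring
    rw [h2, hd, smul_sub, sub_smul, one_smul]
    abel
  refine ⟨ρstar, fun ε hε => (hρspec ε hε).1, ?_, ?_⟩
  · -- strict antitone
    intro ε1 h1 ε2 h2 h12
    simp only [Set.mem_Ioi] at h1 h2
    obtain ⟨hρ1, heq1⟩ := hρspec ε1 h1
    obtain ⟨hρ2, heq2⟩ := hρspec ε2 h2
    obtain ⟨hex1, hqx1, hmin1⟩ := key ε1 (ρstar ε1) h1 hρ1 heq1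
    obtain ⟨hex2, hqx2, hmin2⟩ := key ε2 (ρstar ε2) h2 hρ2 heq2
    obtain ⟨_, _, hmin1'⟩ := key ε1 (ρstar ε1) h1 hρ1 heq1
    set x1 : Fin n → ℝ := xMIN + (κ*(ρstar ε1)/(1+κ*(ρstar ε1))) • d with hx1
    set x2 : Fin n → ℝ := xMIN + (κ*(ρstar ε2)/(1+κ*(ρstar ε2))) • d with hx2
    set a1 : ℝ := Real.sqrt ε1 with ha1
    set a2 : ℝ := Real.sqrt ε2 with ha2
    have ha1p : 0 < a1 := Real.sqrt_pos.mpr h1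
    have ha12 : a1 < a2 := Real.sqrt_lt_sqrt h1.le h12
    have hs1 : Real.sqrt (x1 ⬝ᵥ A *ᵥ x1) = a1 * (ρstar ε1) / 2 := by
      rw [hqx1, sqrt_quarter ε1 _ h1.le hρ1.le]
    have hs2 : Real.sqrt (x2 ⬝ᵥ A *ᵥ x2) = a2 * (ρstar ε2) / 2 := by
      rw [hqx2, sqrt_quarter ε2 _ h2.le hρ2.le]
    -- weak minimality both ways
    have hm1 : κ * (x1 ⬝ᵥ A *ᵥ x1) + a1 * Real.sqrt (x1 ⬝ᵥ A *ᵥ x1) - rbar ⬝ᵥ x1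
        ≤ κ * (x2 ⬝ᵥ A *ᵥ x2) + a1 * Real.sqrt (x2 ⬝ᵥ A *ᵥ x2) - rbar ⬝ᵥ x2 := by
      rcases eq_or_ne x2 x1 with hh | hh
      · rw [hh]
      · exact (hmin1 x2 hex2 hh).le
    have hm2 : κ * (x2 ⬝ᵥ A *ᵥ x2) + a2 * Real.sqrt (x2 ⬝ᵥ A *ᵥ x2) - rbar ⬝ᵥ x2
        ≤ κ * (x1 ⬝ᵥ A *ᵥ x1) + a2 * Real.sqrt (x1 ⬝ᵥ A *ᵥ x1) - rbar ⬝ᵥ x1 := by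
      rcases eq_or_ne x1 x2 with hh | hh
      · rw [hh]
      · exact (hmin2 x1 hex1 hh).le
    rw [hs1, hs2] at hm1 hm2
    exact anti_aux a1 a2 _ _ ha1p ha12 hρ1 hρ2 (by linarith only [hm1, hm2])
  · -- per-ε statement
    intro ε hε
    obtain ⟨hρpos, heq⟩ := hρspec ε hε
    obtain ⟨hex, hqx, hmin⟩ := key ε (ρstar ε) hε hρpos heq
    rw [hcomb (ρstar ε) hρpos]
    exact ⟨hex, hmin⟩
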